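/- Let ω_r > 0 and γ ∈ (−1, 1]. For every ω > 0, the argument of the GFORE describing function satisfies arg G(ω) = arctan(Θ(ω)) − arctan(ω/ω_r). Consequently, for every γ ∈ (−1, 1) the describing-function phase strictly exceeds the phase −arctan(ω/ω_r) of the base linear first-order low-pass filter ω_r/(ω_r + i·ω) at every frequency ω > 0 (phase-lag reduction by reset). -/

import Mathlib

/-- Describing-function correction term of GFORE with corner frequency `ωr`
and reset parameter `γ`, at frequency `ω`. -/
noncomputable def Theta (ωr γ ω : ℝ) : ℝ :=
  (2 / Real.pi) * (1 + Real.exp (-Real.pi * ωr / ω)) *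
    ((1 - γ) / (1 + γ * Real.exp (-Real.pi * ωr / ω))) * (ω ^ 2 / (ωr ^ 2 + ω ^ 2))

/-- Describing function of GFORE at frequency `ω`. -/
noncomputable def GforeDF (ωr γ ω : ℝ) : ℂ :=
  (ωr : ℂ) * (1 + Complex.I * (Theta ωr γ ω : ℝ)) / ((ωr : ℂ) + Complex.I * (ω : ℝ))

lemma arg_of_re_pos' {z : ℂ} (hz : 0 < z.re) :
    Complex.arg z = Real.arctan (z.im / z.re) := by
  have h := Complex.abs_arg_lt_pi_div_two_iff.mpr (Or.inl hz)
  rw [abs_lt] at h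
  rw [← Complex.tan_arg, Real.arctan_tan h.1 h.2]

lemma theta_pos_parts {ωr γ ω : ℝ} (hωr : 0 < ωr) (hγ1 : -1 < γ) (hω : 0 < ω) :
    0 < 1 + γ * Real.exp (-Real.pi * ωr / ω) := by
  set e := Real.exp (-Real.pi * ωr / ω) with he
  have he0 : 0 < e := Real.exp_pos _
  have he1 : e < 1 := by
    rw [he]
    apply Real.exp_lt_one_iff.mpr
    have h0 : 0 < Real.pi * ωr / ω := by have := Real.pi_pos; positivity
    have : -Real.pi * ωr / ω = -(Real.pi * ωr / ω) := by ring
    linarith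
  nlinarith

lemma theta_nonneg {ωr γ ω : ℝ} (hωr : 0 < ωr) (hγ1 : -1 < γ) (hγ2 : γ ≤ 1) (hω : 0 < ω) :
    0 ≤ Theta ωr γ ω := by
  have h1 := theta_pos_parts hωr hγ1 hω
  have hpi := Real.pi_pos
  have he0 : (0:ℝ) < Real.exp (-Real.pi * ωr / ω) := Real.exp_pos _
  unfold Theta
  have : 0 ≤ 1 - γ := by linarith
  positivity

lemma theta_pos {ωr γ ω : ℝ} (hωr : 0 < ωr) (hγ1 : -1 < γ) (hγ2 : γ < 1) (hω : 0 < ω) :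
    0 < Theta ωr γ ω := by
  have h1 := theta_pos_parts hωr hγ1 hω
  have hpi := Real.pi_pos
  have he0 : (0:ℝ) < Real.exp (-Real.pi * ωr / ω) := Real.exp_pos _
  unfold Theta
  have : 0 < 1 - γ := by linarith
  positivity

/-- For `ωr > 0` and `γ ∈ (−1, 1]`, the argument of the GFORE describing function is
`arctan (Θ(ω)) − arctan (ω/ωr)` for every `ω > 0`; consequently for `γ ∈ (−1, 1)` the
describing-function phase strictly exceeds the phase `−arctan (ω/ωr)` of the base
linear first-order low-pass filter at every frequency (phase-lag reduction by reset). -/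
theorem gfore_arg (ωr γ : ℝ) (hωr : 0 < ωr) (hγ : γ ∈ Set.Ioc (-1 : ℝ) 1) :
    (∀ ω : ℝ, 0 < ω →
      Complex.arg (GforeDF ωr γ ω) = Real.arctan (Theta ωr γ ω) - Real.arctan (ω / ωr)) ∧
    (γ ∈ Set.Ioo (-1 : ℝ) 1 → ∀ ω : ℝ, 0 < ω →
      Complex.arg (GforeDF ωr γ ω) > -Real.arctan (ω / ωr)) := by
  obtain ⟨hγ1, hγ2⟩ := hγ
  have main : ∀ ω : ℝ, 0 < ω →
      Complex.arg (GforeDF ωr γ ω) = Real.arctan (Theta ωr γ ω) - Real.arctan (ω / ωr) := by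
    intro ω hω
    set Θ := Theta ωr γ ω with hΘdef
    have hΘ : 0 ≤ Θ := theta_nonneg hωr hγ1 hγ2 hω
    have hd : (0:ℝ) < ωr ^ 2 + ω ^ 2 := by positivity
    -- rewrite G in a/(re+im*I) normalized form
    have hden : ((ωr : ℂ) + Complex.I * (ω : ℝ)) ≠ 0 := by
      intro h
      have := congrArg Complex.re h
      simp at this
      linarith
    have hre : (GforeDF ωr γ ω).re = ωr * (ωr + Θ * ω) / (ωr ^ 2 + ω ^ 2) := by
      unfold GforeDF
      rw [Complex.div_re]
      simp [Complex.normSq_apply]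
      ring
    have him : (GforeDF ωr γ ω).im = ωr * (Θ * ωr - ω) / (ωr ^ 2 + ω ^ 2) := by
      unfold GforeDF
      rw [Complex.div_im]
      simp [Complex.normSq_apply]
      ring
    have hrepos : 0 < (GforeDF ωr γ ω).re := by
      rw [hre]
      have : 0 < ωr + Θ * ω := by positivity
      positivity
    rw [arg_of_re_pos' hrepos, hre, him]
    have hq : ωr * (Θ * ωr - ω) / (ωr ^ 2 + ω ^ 2) / (ωr * (ωr + Θ * ω) / (ωr ^ 2 + ω ^ 2))
        = (Θ + -(ω / ωr)) / (1 - Θ * -(ω / ωr)) := by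
      have h2 : (0:ℝ) < ωr + Θ * ω := by positivity
      field_simp
      rw [eq_div_iff (by nlinarith)]
      ring
    rw [hq, ← Real.arctan_add (by nlinarith [mul_nonneg hΘ (le_of_lt (div_pos hω hωr))] : Θ * -(ω / ωr) < 1), Real.arctan_neg]
    ring
  refine ⟨main, ?_⟩
  rintro ⟨h1, h2⟩ ω hω
  rw [main ω hω]
  have : 0 < Real.arctan (Theta ωr γ ω) :=
    Real.arctan_zero ▸ Real.arctan_strictMono (theta_pos hωr h1 h2 hω)
  linarith
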